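/- arXiv:2101.10024 — 6 statements merged into one kernel-verified Lean document; each statement's English description precedes it below -/
import Mathlib

section
/- Let K be a subfield of ℝ, let m ≥ 1, and let S be an invertible m×m real matrix such that for all indices i, j, every entry of the matrix S · E_{ij} · S⁻¹ lies in K, where E_{ij} denotes the standard basis matrix with 1 in position (i,j) and 0 elsewhere. Then there exist a nonzero real number λ and an m×m matrix M all of whose entries lie in K such that S = λ · M. -/
lemma aux_entry (m : ℕ) (S T : Matrix (Fin m) (Fin m) ℝ) (i j k l : Fin m) :
    (S * Matrix.single i j (1 : ℝ) * T) k l = S k i * T j l := by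
  rw [Matrix.mul_assoc]
  rw [Matrix.mul_apply]
  rw [Finset.sum_eq_single i]
  · rw [Matrix.mul_apply, Finset.sum_eq_single j]
    · simp [Matrix.single]
    · intro b _ hb; simp [Matrix.single, hb, Ne.symm hb]
    · simp
  · intro b _ hb
    have : (Matrix.single i j (1 : ℝ) * T) b l = 0 := by
      rw [Matrix.mul_apply]
      apply Finset.sum_eq_zero
      intro c _
      simp [Matrix.single, Ne.symm hb]
    simp [this]
  · simp

/-- If `S` is an invertible real `m×m` matrix such that every entry of
`S * E_{ij} * S⁻¹` lies in the subfield `K` of `ℝ`, then `S = λ • M` for some nonzero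
real `λ` and a matrix `M` with entries in `K`. -/
theorem stmt0 (K : Subfield ℝ) (m : ℕ) (hm : 1 ≤ m)
    (S : Matrix (Fin m) (Fin m) ℝ) (hS : IsUnit S)
    (h : ∀ i j k l : Fin m,
      (S * Matrix.single i j (1 : ℝ) * S⁻¹) k l ∈ K) :
    ∃ (lam : ℝ) (M : Matrix (Fin m) (Fin m) ℝ),
      lam ≠ 0 ∧ (∀ k l, M k l ∈ K) ∧ S = lam • M := by
  have hinv : S * S⁻¹ = 1 :=
    Matrix.mul_nonsing_inv S ((Matrix.isUnit_iff_isUnit_det S).mp hS)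
  -- S⁻¹ has a nonzero entry
  have hne : ∃ j0 l0, S⁻¹ j0 l0 ≠ 0 := by
    by_contra hc
    push_neg at hc
    have : S⁻¹ = 0 := by ext a b; exact hc a b
    have h1 : (1 : Matrix (Fin m) (Fin m) ℝ) = 0 := by rw [← hinv, this, Matrix.mul_zero]
    have i0 : Fin m := ⟨0, hm⟩
    have := congrFun (congrFun h1 i0) i0
    simp at this
  obtain ⟨j0, l0, hc⟩ := hne
  refine ⟨(S⁻¹ j0 l0)⁻¹, (S⁻¹ j0 l0) • S, inv_ne_zero hc, ?_, ?_⟩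
  · intro k i
    have := h i j0 k l0
    rw [aux_entry] at this
    simpa [mul_comm] using this
  · rw [smul_smul, inv_mul_cancel₀ hc, one_smul]
end

section
/- Let K be a subfield of ℝ, let m ≥ 1, and let Q₁, Q₂ be symmetric invertible m×m real matrices all of whose entries lie in K. Suppose there is an invertible m×m real matrix S with Q₁ = Sᵀ · Q₂ · S, and such that for all indices i, j, every entry of S · E_{ij} · S⁻¹ lies in K, where E_{ij} denotes the standard basis matrix with 1 in position (i,j) and 0 elsewhere. Then there exist μ ∈ K with μ > 0 and an invertible m×m matrix M all of whose entries lie in K such that Q₁ = μ · (Mᵀ · Q₂ · M). In particular, the quadratic forms represented by Q₁ and Q₂ are similar over K with a positive similarity factor. -/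
open Matrix

lemma mul_std_mul_apply {m : ℕ} (A B : Matrix (Fin m) (Fin m) ℝ) (i j k l : Fin m) :
    (A * Matrix.single i j (1 : ℝ) * B) k l = A k i * B j l := by
  simp [Matrix.mul_apply, Matrix.single, ite_and, Finset.sum_ite_eq,
    Finset.sum_ite_eq', mul_comm]

/-- If the symmetric invertible real matrices `Q₁`, `Q₂` have entries in the
subfield `K` of `ℝ`, are congruent via an invertible real matrix `S` with `Q₁ = Sᵀ Q₂ S`,
and every entry of `S * E_{ij} * S⁻¹` lies in `K`, then `Q₁ = μ • (Mᵀ Q₂ M)` for some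
`μ ∈ K`, `μ > 0`, and an invertible matrix `M` with entries in `K`. -/
theorem stmt1 (K : Subfield ℝ) (m : ℕ) (hm : 1 ≤ m)
    (Q₁ Q₂ : Matrix (Fin m) (Fin m) ℝ)
    (hQ₁s : Q₁.IsSymm) (hQ₂s : Q₂.IsSymm)
    (hQ₁u : IsUnit Q₁) (hQ₂u : IsUnit Q₂)
    (hQ₁K : ∀ k l, Q₁ k l ∈ K) (hQ₂K : ∀ k l, Q₂ k l ∈ K)
    (S : Matrix (Fin m) (Fin m) ℝ) (hSu : IsUnit S)
    (hQ : Q₁ = Sᵀ * Q₂ * S)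
    (h : ∀ i j k l : Fin m,
      (S * Matrix.single i j (1 : ℝ) * S⁻¹) k l ∈ K) :
    ∃ (μ : ℝ) (M : Matrix (Fin m) (Fin m) ℝ),
      μ ∈ K ∧ 0 < μ ∧ IsUnit M ∧ (∀ k l, M k l ∈ K) ∧
      Q₁ = μ • (Mᵀ * Q₂ * M) := by
  haveI : NeZero m := ⟨by omega⟩
  -- S⁻¹ has a nonzero entry
  have hSinvne : S⁻¹ ≠ 0 := by
    intro h0
    have h1 : S⁻¹ * S = 1 := Matrix.nonsing_inv_mul S ((Matrix.isUnit_iff_isUnit_det S).1 hSu)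
    rw [h0, Matrix.zero_mul] at h1
    exact one_ne_zero h1.symm
  obtain ⟨j₀, l₀, hc⟩ : ∃ j₀ l₀, S⁻¹ j₀ l₀ ≠ 0 := by
    by_contra hcon
    push_neg at hcon
    exact hSinvne (by ext a b; exact hcon a b)
  set c : ℝ := S⁻¹ j₀ l₀ with hcdef
  set M : Matrix (Fin m) (Fin m) ℝ := c • S with hM
  have hMK : ∀ k l, M k l ∈ K := by
    intro k i
    have := h i j₀ k l₀
    rw [mul_std_mul_apply] at this
    simpa [hM, mul_comm] using this
  have hMu : IsUnit M := by
    rw [hM]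
    rw [Matrix.isUnit_iff_isUnit_det, Matrix.det_smul]
    exact ((Ne.isUnit hc).pow _).mul ((Matrix.isUnit_iff_isUnit_det S).1 hSu)
  -- Mᵀ Q₂ M = c² • Q₁
  have hMQ : Mᵀ * Q₂ * M = (c * c) • Q₁ := by
    rw [hM, hQ]
    rw [Matrix.transpose_smul]
    rw [Matrix.smul_mul, Matrix.mul_smul, Matrix.smul_mul]
    rw [smul_smul]
  -- Q₁ has a nonzero entry
  obtain ⟨k₀, l₁, hq⟩ : ∃ k l, Q₁ k l ≠ 0 := by
    by_contra hcon
    push_neg at hcon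
    have : Q₁ = 0 := by ext a b; exact hcon a b
    rw [this] at hQ₁u
    exact (not_isUnit_zero : ¬ IsUnit (0 : Matrix (Fin m) (Fin m) ℝ)) hQ₁u
  -- entries of Mᵀ Q₂ M lie in K
  have hMQK : ∀ k l, (Mᵀ * Q₂ * M) k l ∈ K := by
    intro k l
    rw [Matrix.mul_apply]
    refine Subfield.sum_mem K fun b _ => ?_
    refine mul_mem ?_ (hMK b l)
    rw [Matrix.mul_apply]
    refine Subfield.sum_mem K fun a _ => ?_
    exact mul_mem (hMK a k) (hQ₂K a b)
  have hc2 : (c * c) ≠ 0 := mul_ne_zero hc hc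
  refine ⟨(c * c)⁻¹, M, ?_, ?_, hMu, hMK, ?_⟩
  · -- (c*c)⁻¹ = Q₁ k₀ l₁ / (Mᵀ Q₂ M) k₀ l₁ ∈ K
    have hval : (Mᵀ * Q₂ * M) k₀ l₁ = (c * c) * Q₁ k₀ l₁ := by
      rw [hMQ]; simp
    have : (c * c)⁻¹ = Q₁ k₀ l₁ * ((Mᵀ * Q₂ * M) k₀ l₁)⁻¹ := by
      rw [hval]
      field_simp
    rw [this]
    exact mul_mem (hQ₁K k₀ l₁) (Subfield.inv_mem K (hMQK k₀ l₁))
  · exact inv_pos.2 (mul_self_pos.2 hc)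
  · rw [hMQ, smul_smul, inv_mul_cancel₀ hc2, one_smul]
end

section
/- Let R be a commutative ring, let N ≥ 1, and let G be an N×N matrix over R. Let S be a subring of R that contains every simple cyclic product of G. Then every coefficient of the characteristic polynomial of G lies in S. -/
open Polynomial Finset

/-- The subring of polynomials all of whose coefficients lie in `S`. -/
def coeffSubring {R : Type*} [CommRing R] (S : Subring R) : Subring R[X] where
  carrier := {p | ∀ k, p.coeff k ∈ S}
  zero_mem' := by intro k; rw [Polynomial.coeff_zero]; exact S.zero_mem
  one_mem' := by
    intro k; rw [coeff_one]; split
    · exact S.one_mem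
    · exact S.zero_mem
  add_mem' := fun hp hq k => by rw [coeff_add]; exact S.add_mem (hp k) (hq k)
  neg_mem' := fun hp k => by rw [coeff_neg]; exact S.neg_mem (hp k)
  mul_mem' := fun hp hq k => by
    rw [coeff_mul]; exact S.sum_mem fun x _ => S.mul_mem (hp _) (hq _)

lemma mem_coeffSubring {R : Type*} [CommRing R] (S : Subring R) (p : R[X]) :
    p ∈ coeffSubring S ↔ ∀ k, p.coeff k ∈ S := Iff.rfl

lemma cycleProd_mem {R : Type*} [CommRing R] {N : ℕ}
    (G : Matrix (Fin N) (Fin N) R) (S : Subring R)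
    (h : ∀ (l : ℕ) (v : Fin (l + 1) → Fin N), Function.Injective v →
      (∏ k : Fin (l + 1), G (v k) (v (k + 1))) ∈ S)
    (σ : Equiv.Perm (Fin N)) :
    (∏ i ∈ σ.support, G (σ i) i) ∈ S := by
  induction σ using Equiv.Perm.cycle_induction_on with
  | base_one => simpa using S.one_mem
  | base_cycles σ hσ =>
    obtain ⟨x, hx, -⟩ := id hσ
    have hm1 : 1 ≤ orderOf σ := orderOf_pos σ
    set m := orderOf σ with hmdef
    obtain ⟨l, hl⟩ : ∃ l, l + 1 = m := ⟨m - 1, Nat.succ_pred_eq_of_pos hm1⟩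
    have hm2 : 2 ≤ m := by
      rw [hmdef, Equiv.Perm.IsCycle.orderOf hσ]; exact hσ.two_le_card_support
    have hcinv : (σ⁻¹).IsCycle := Equiv.Perm.IsCycle.inv hσ
    have hxinv : σ⁻¹ x ≠ x := by
      intro hcon; exact hx (by conv_lhs => rw [← hcon, Equiv.Perm.coe_inv, Equiv.apply_symm_apply])
    have hordinv : orderOf σ⁻¹ = m := by rw [orderOf_inv]
    set v : Fin (l + 1) → Fin N := fun k => (σ⁻¹ ^ (k : ℕ)) x with hv
    have hinj : Function.Injective v := by
      intro a b hab
      have hpow : σ⁻¹ ^ (a : ℕ) = σ⁻¹ ^ (b : ℕ) :=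
        hcinv.pow_eq_pow_iff.mpr ⟨x, hxinv, hab⟩
      have ha' : (a : ℕ) < orderOf σ⁻¹ := by rw [hordinv, ← hl]; exact a.isLt
      have hb' : (b : ℕ) < orderOf σ⁻¹ := by rw [hordinv, ← hl]; exact b.isLt
      exact Fin.ext (pow_injOn_Iio_orderOf ha' hb' hpow)
    have hxsupp : x ∈ σ.support := Equiv.Perm.mem_support.mpr hx
    have hvsupp : ∀ k, v k ∈ σ.support := by
      intro k
      have : (σ⁻¹ ^ (k : ℕ)) x ∈ (σ⁻¹).support :=
        Equiv.Perm.pow_apply_mem_support.mpr (by rwa [Equiv.Perm.support_inv])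
      rwa [Equiv.Perm.support_inv] at this
    have key : ∀ n : ℕ, σ⁻¹ ^ (n % (l + 1)) = σ⁻¹ ^ n := by
      intro n
      rw [show l + 1 = orderOf σ⁻¹ from by rw [hordinv, ← hl], pow_mod_orderOf]
    have hstep : ∀ k : Fin (l + 1), v (k + 1) = σ⁻¹ (v k) := by
      intro k
      have h1m : (1 : ℕ) % (l + 1) = 1 := Nat.mod_eq_of_lt (by omega)
      have hval : ((k + 1 : Fin (l + 1)) : ℕ) = ((k : ℕ) + 1) % (l + 1) := by
        rw [Fin.val_add, Fin.val_one', h1m]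
      simp only [hv, hval, key, pow_succ']
      rfl
    have hprod : ∏ k : Fin (l + 1), G (v k) (v (k + 1)) = ∏ i ∈ σ.support, G (σ i) i := by
      have e1 : ∀ k : Fin (l + 1), G (v k) (v (k + 1)) = G (σ (v (k + 1))) (v (k + 1)) := by
        intro k; rw [hstep k, Equiv.Perm.coe_inv, Equiv.apply_symm_apply]
      rw [Finset.prod_congr rfl (fun k _ => e1 k)]
      have e2 : ∏ k : Fin (l + 1), G (σ (v (k + 1))) (v (k + 1))
          = ∏ j : Fin (l + 1), G (σ (v j)) (v j) :=
        Fintype.prod_bijective (· + (1 : Fin (l + 1))) (Equiv.addRight 1).bijective _ _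
          (fun k => rfl)
      rw [e2]
      refine Finset.prod_bij (fun a _ => v a) (fun a _ => hvsupp a)
        (fun a _ b _ hab => hinj hab) ?_ (fun a _ => rfl)
      intro b hb
      have hbne : σ⁻¹ b ≠ b := by
        intro hcon
        exact (Equiv.Perm.mem_support.mp hb)
          (by conv_lhs => rw [← hcon, Equiv.Perm.coe_inv, Equiv.apply_symm_apply])
      obtain ⟨i, hi⟩ := hcinv.exists_pow_eq hxinv hbne
      refine ⟨⟨i % (l + 1), Nat.mod_lt _ (by omega)⟩, Finset.mem_univ _, ?_⟩
      show (σ⁻¹ ^ (i % (l + 1))) x = b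
      rw [key, hi]
    rw [← hprod]
    exact h l v hinj
  | induction_disjoint σ τ hd hc hσ hτ =>
    rw [hd.support_mul, Finset.prod_union hd.disjoint_support]
    have e1 : ∀ i ∈ σ.support, G ((σ * τ) i) i = G (σ i) i := by
      intro i hi
      have : τ i = i := by
        rcases (Equiv.Perm.disjoint_iff_eq_or_eq.mp hd) i with h' | h'
        · exact absurd h' (Equiv.Perm.mem_support.mp hi)
        · exact h'
      simp [Equiv.Perm.mul_apply, this]
    have e2 : ∀ i ∈ τ.support, G ((σ * τ) i) i = G (τ i) i := by
      intro i hi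
      have hti : τ i ∈ τ.support := Equiv.Perm.apply_mem_support.mpr hi
      have : σ (τ i) = τ i := by
        rcases (Equiv.Perm.disjoint_iff_eq_or_eq.mp hd) (τ i) with h' | h'
        · exact h'
        · exact absurd h' (Equiv.Perm.mem_support.mp hti)
      simp [Equiv.Perm.mul_apply, this]
    rw [Finset.prod_congr rfl e1, Finset.prod_congr rfl e2]
    exact S.mul_mem hσ hτ

/-- If a subring `S` of a commutative ring `R` contains every simple cyclic
product of an `N×N` matrix `G` over `R`, then every coefficient of the characteristic
polynomial of `G` lies in `S`. -/
theorem stmt4 (R : Type*) [CommRing R] (N : ℕ) (hN : 1 ≤ N)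
    (G : Matrix (Fin N) (Fin N) R) (S : Subring R)
    (h : ∀ (l : ℕ) (v : Fin (l + 1) → Fin N), Function.Injective v →
      (∏ k : Fin (l + 1), G (v k) (v (k + 1))) ∈ S) :
    ∀ i, G.charpoly.coeff i ∈ S := by
  have hdiag : ∀ i : Fin N, G i i ∈ S := by
    intro i
    have := h 0 (fun _ => i) (fun a b _ => Fin.ext (by omega))
    simpa using this
  have hC : ∀ s ∈ S, (C s : R[X]) ∈ coeffSubring S := by
    intro s hs k
    rw [coeff_C]; split
    · exact hs
    · exact S.zero_mem
  have hX : (X : R[X]) ∈ coeffSubring S := by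
    intro k
    rw [coeff_X]; split
    · exact S.one_mem
    · exact S.zero_mem
  suffices hT : G.charpoly ∈ coeffSubring S from fun i => hT i
  rw [Matrix.charpoly, Matrix.det_apply]
  refine Subring.sum_mem _ fun σ _ => ?_
  rw [Units.smul_def]
  refine zsmul_mem ?_ _
  rw [← Finset.prod_mul_prod_compl σ.support]
  refine Subring.mul_mem _ ?_ ?_
  · have e1 : ∀ i ∈ σ.support, Matrix.charmatrix G (σ i) i = -C (G (σ i) i) := by
      intro i hi
      exact Matrix.charmatrix_apply_ne _ _ _ (Equiv.Perm.mem_support.mp hi)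
    rw [Finset.prod_congr rfl e1]
    have e3 : ∏ i ∈ σ.support, -C (G (σ i) i)
        = (-1 : R[X]) ^ σ.support.card * C (∏ i ∈ σ.support, G (σ i) i) := by
      rw [map_prod, ← Finset.prod_const, ← Finset.prod_mul_distrib]
      exact Finset.prod_congr rfl fun i _ => (neg_one_mul _).symm
    rw [e3]
    exact Subring.mul_mem _ (Subring.pow_mem _ (Subring.neg_mem _ (Subring.one_mem _)) _)
      (hC _ (cycleProd_mem G S h σ))
  · refine Subring.prod_mem _ fun i hi => ?_
    have hfix : σ i = i := by
      rw [Finset.mem_compl, Equiv.Perm.notMem_support] at hi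
      exact hi
    rw [hfix, Matrix.charmatrix_apply_eq]
    exact Subring.sub_mem _ hX (hC _ (hdiag i))
end

section
/- Let F be a totally real number field with a fixed ring embedding ι : F → ℝ, let N ≥ 1, and let G be a symmetric N×N matrix over F such that the real matrix ι(G) (obtained by applying ι entrywise) is not positive semidefinite. Let K be the subfield of F generated over ℚ by all the cyclic products of G. Assume that for every ring homomorphism σ : F → ℝ whose restriction to K differs from the restriction of ι to K, the real matrix σ(G) (obtained by applying σ entrywise) is positive semidefinite. Then K equals the subfield of F generated over ℚ by the coefficients of the characteristic polynomial of G. -/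
open Matrix Polynomial


lemma auxCycProdMem {F : Type*} [Field F] {N : ℕ}
    (G : Matrix (Fin N) (Fin N) F) (hGs : G.IsSymm) (K : Subfield F)
    (hgen : ∀ (l : ℕ) (v : Fin (l + 1) → Fin N),
        (∏ k : Fin (l + 1), G (v k) (v (k + 1))) ∈ K)
    (π : Equiv.Perm (Fin N)) :
    (∏ j ∈ π.support, G (π j) j) ∈ K := by
  induction π using Equiv.Perm.cycle_induction_on with
  | base_one => simpa using one_mem K
  | base_cycles c hc =>
    obtain ⟨x, hx, -⟩ := id hc
    have hx' : x ∈ c.support := Equiv.Perm.mem_support.mpr hx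
    have hm2 : 2 ≤ c.support.card := hc.two_le_card_support
    have hord : orderOf c = c.support.card := hc.orderOf
    obtain ⟨l, hl⟩ : ∃ l, c.support.card = l + 1 := ⟨c.support.card - 1, by omega⟩
    have hcyc : c.IsCycleOn (c.support : Set (Fin N)) := by
      rw [Equiv.Perm.coe_support_eq_set_support]; exact hc.isCycleOn
    set v : Fin (l + 1) → Fin N := fun k => (c ^ (k : ℕ)) x with hv
    have hpow : ∀ n : ℕ, (c ^ (n % (l + 1))) x = (c ^ n) x := by
      intro n; rw [← hl, ← hord, pow_mod_orderOf]
    have hGsym : ∀ a b, G a b = G b a := fun a b => hGs.apply b a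
    have hstep : ∀ k : Fin (l + 1), v (k + 1) = c (v k) := by
      intro k
      have h1 : ((k + 1 : Fin (l + 1)) : ℕ) = ((k : ℕ) + 1) % (l + 1) := by
        have hll : 1 < l + 1 := by omega
        simp [Fin.add_def, Nat.mod_eq_of_lt hll]
      show (c ^ ((k + 1 : Fin (l+1)) : ℕ)) x = c ((c ^ (k : ℕ)) x)
      rw [h1, hpow, pow_succ', Equiv.Perm.mul_apply]
    have key : (∏ k : Fin (l + 1), G (v k) (v (k + 1))) = ∏ j ∈ c.support, G (c j) j := by
      have e1 : (∏ k : Fin (l + 1), G (v k) (v (k + 1)))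
          = ∏ k : Fin (l + 1), G (c (v k)) (v k) := by
        refine Finset.prod_congr rfl fun k _ => ?_
        rw [hstep k, hGsym]
      rw [e1]
      refine Finset.prod_bij (fun k _ => v k) ?_ ?_ ?_ ?_
      · intro k _
        have : c (v k) ≠ v k := by
          show c ((c ^ (k : ℕ)) x) ≠ (c ^ (k : ℕ)) x
          have : c ((c ^ (k : ℕ)) x) = (c ^ (k : ℕ)) (c x) := by
            rw [← Equiv.Perm.mul_apply, ← Equiv.Perm.mul_apply]
            congr 1
            exact (Commute.refl c).pow_right _ |>.symm.eq ▸ rfl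
          rw [this]
          exact fun h => hx ((c ^ (k : ℕ)).injective h)
        exact Equiv.Perm.mem_support.mpr this
      · intro a _ b _ hab
        have := (hcyc.pow_apply_eq_pow_apply hx').mp hab
        have ha : (a : ℕ) % c.support.card = (b : ℕ) % c.support.card := this
        rw [hl] at ha
        exact Fin.ext (by rwa [Nat.mod_eq_of_lt a.isLt, Nat.mod_eq_of_lt b.isLt] at ha)
      · intro j hj
        obtain ⟨i, hi⟩ := hc.exists_pow_eq hx (Equiv.Perm.mem_support.mp hj)
        refine ⟨⟨i % (l + 1), Nat.mod_lt _ (by omega)⟩, Finset.mem_univ _, ?_⟩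
        show (c ^ (i % (l + 1))) x = j
        rw [hpow]; exact hi
      · intro k _; rfl
    rw [← key]; exact hgen l v
  | induction_disjoint σ τ hd hσ ihσ ihτ =>
    rw [hd.support_mul, Finset.prod_union hd.disjoint_support]
    have h1 : (∏ j ∈ σ.support, G ((σ * τ) j) j) = ∏ j ∈ σ.support, G (σ j) j := by
      refine Finset.prod_congr rfl fun j hj => ?_
      have : τ j = j := by
        apply Equiv.Perm.notMem_support.mp
        exact Finset.disjoint_left.mp hd.disjoint_support hj
      rw [Equiv.Perm.mul_apply, this]
    have h2 : (∏ j ∈ τ.support, G ((σ * τ) j) j) = ∏ j ∈ τ.support, G (τ j) j := by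
      refine Finset.prod_congr rfl fun j hj => ?_
      have hτj : τ j ∈ τ.support := Equiv.Perm.apply_mem_support.mpr hj
      have : σ (τ j) = τ j := by
        apply Equiv.Perm.notMem_support.mp
        exact Finset.disjoint_left.mp hd.disjoint_support.symm hτj
      rw [Equiv.Perm.mul_apply, this]
    rw [h1, h2]
    exact mul_mem ihσ ihτ


def auxCoeffSubring {F : Type*} [Field F] (K : Subfield F) : Subring (Polynomial F) where
  carrier := {p | ∀ n, p.coeff n ∈ K}
  zero_mem' := fun n => by simpa using zero_mem K
  one_mem' := fun n => by
    rw [Polynomial.coeff_one]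
    split_ifs
    exacts [one_mem K, zero_mem K]
  add_mem' := fun {p q} hp hq n => by
    rw [Polynomial.coeff_add]; exact add_mem (hp n) (hq n)
  neg_mem' := fun {p} hp n => by
    rw [Polynomial.coeff_neg]; exact neg_mem (hp n)
  mul_mem' := fun {p q} hp hq n => by
    rw [Polynomial.coeff_mul]
    exact sum_mem fun c _ => mul_mem (hp _) (hq _)

lemma auxCharpolyCoeffMem {F : Type*} [Field F] {N : ℕ}
    (G : Matrix (Fin N) (Fin N) F) (K : Subfield F)
    (hdiag : ∀ i, G i i ∈ K)
    (hcyc : ∀ π : Equiv.Perm (Fin N), (∏ j ∈ π.support, G (π j) j) ∈ K)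
    (n : ℕ) : G.charpoly.coeff n ∈ K := by
  suffices h : G.charpoly ∈ auxCoeffSubring K from h n
  rw [Matrix.charpoly, Matrix.det_apply]
  refine sum_mem fun π _ => ?_
  rw [Units.smul_def]
  refine zsmul_mem ?_ _
  rw [← Finset.prod_mul_prod_compl π.support]
  refine mul_mem ?_ ?_
  · have h1 : ∀ i ∈ π.support, charmatrix G (π i) i = C (-(G (π i) i)) := by
      intro i hi
      rw [charmatrix_apply_ne _ _ _ (Equiv.Perm.mem_support.mp hi), map_neg]
    rw [Finset.prod_congr rfl h1, ← map_prod]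
    have h2 : (∏ i ∈ π.support, -(G (π i) i)) ∈ K := by
      have : (∏ i ∈ π.support, -(G (π i) i))
          = (-1 : F) ^ π.support.card * ∏ i ∈ π.support, G (π i) i := by
        rw [← Finset.prod_const, ← Finset.prod_mul_distrib]
        exact Finset.prod_congr rfl fun i _ => (neg_one_mul _).symm
      rw [this]
      exact mul_mem (pow_mem (neg_mem (one_mem K)) _) (hcyc π)
    intro k
    rw [Polynomial.coeff_C]
    split_ifs with h
    · exact h2
    · exact zero_mem K
  · refine prod_mem fun i hi => ?_
    have hfix : π i = i := by
      apply Equiv.Perm.notMem_support.mp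
      simpa using Finset.mem_compl.mp hi
    have : charmatrix G (π i) i = X - C (G i i) := by
      rw [hfix, charmatrix_apply_eq]
    rw [this]
    intro k
    rw [Polynomial.coeff_sub, Polynomial.coeff_X, Polynomial.coeff_C]
    refine sub_mem ?_ ?_
    · split_ifs; exacts [one_mem K, zero_mem K]
    · split_ifs; exacts [hdiag i, zero_mem K]


lemma auxCharpolyEvalDet {R : Type*} [CommRing R] {n : ℕ} (M : Matrix (Fin n) (Fin n) R) (r : R) :
    M.charpoly.eval r = (r • (1 : Matrix (Fin n) (Fin n) R) - M).det := by
  rw [Matrix.charpoly, ← Polynomial.coe_evalRingHom, RingHom.map_det]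
  congr 1
  ext i j
  by_cases h : i = j
  · subst h
    rw [RingHom.mapMatrix_apply, Matrix.map_apply, charmatrix_apply_eq]
    simp [Matrix.sub_apply, Matrix.smul_apply, Matrix.one_apply]
  · rw [RingHom.mapMatrix_apply, Matrix.map_apply, charmatrix_apply_ne _ _ _ h]
    simp [Matrix.sub_apply, Matrix.smul_apply, Matrix.one_apply_ne h]


lemma auxExistsEmbedding (F : Type*) [Field F] [NumberField F]
    (htr : ∀ σ : F →+* ℂ, ∀ x : F, (σ x).im = 0)
    (ι : F →+* ℝ) (L : Subfield F) (x : F) (hx : x ∉ L) :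
    ∃ σ : F →+* ℝ, (∀ y ∈ L, σ y = ι y) ∧ σ x ≠ ι x := by
  classical
  -- L as an intermediate field of ℚ ⊆ F
  let E : IntermediateField ℚ F :=
    { toSubalgebra :=
      { toSubsemiring := L.toSubring.toSubsemiring
        algebraMap_mem' := fun q => by
          have : algebraMap ℚ F q = (q : F) := by
            exact_mod_cast eq_ratCast (algebraMap ℚ F) q
          rw [this]
          exact SubfieldClass.ratCast_mem L q }
      inv_mem' := fun y hy => L.inv_mem hy }
  have hmemE : ∀ y : F, y ∈ E ↔ y ∈ L := fun y => Iff.rfl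
  have hxE : x ∉ E := hx
  haveI : FiniteDimensional ℚ F := Module.Finite.of_restrictScalars_finite ℚ ℚ F
  have hint : IsIntegral E x := by
    have h0 : IsIntegral ℚ x := IsIntegral.of_finite ℚ x
    exact IsIntegral.tower_top h0
  have hdeg : 2 ≤ (minpoly E x).natDegree := by
    rw [minpoly.two_le_natDegree_iff hint]
    rintro ⟨⟨y, hy⟩, rfl⟩
    exact hxE hy
  -- ℂ as an E-algebra via ι
  let ιc : F →+* ℂ := Complex.ofRealHom.comp ι
  letI : Algebra E ℂ := (ιc.comp (algebraMap E F)).toAlgebra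
  have halg : (algebraMap E ℂ : E →+* ℂ) = ιc.comp (algebraMap E F) := rfl
  -- the mapped minpoly has at least two distinct roots
  haveI : CharZero E := (algebraMap E F).charZero
  have hsep : (minpoly E x).Separable := (minpoly.irreducible hint).separable
  set q : ℂ[X] := (minpoly E x).map (algebraMap E ℂ) with hq
  have hq0 : q ≠ 0 := Polynomial.map_ne_zero (minpoly.ne_zero hint)
  have hqsep : q.Separable := hsep.map
  have hcard : 2 ≤ q.roots.toFinset.card := by
    rw [Multiset.toFinset_card_of_nodup (Polynomial.nodup_roots hqsep)]
    have : q.roots.card = q.natDegree := (Polynomial.splits_iff_card_roots).mp (IsAlgClosed.splits q)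
    rw [this, hq, Polynomial.natDegree_map]
    exact hdeg
  have h1lt : 1 < q.roots.toFinset.card := by omega
  obtain ⟨r, hr, hrne⟩ := Finset.exists_mem_ne h1lt (ιc x)
  have hrroot : r ∈ (minpoly E x).aroots ℂ := by
    rw [Polynomial.aroots]
    exact Multiset.mem_toFinset.mp hr
  -- algebra hom from E⟮x⟯ to ℂ sending x to r
  let φ₀ : IntermediateField.adjoin E {x} →ₐ[E] ℂ :=
    (IntermediateField.algHomAdjoinIntegralEquiv E hint).symm ⟨r, hrroot⟩
  have hφ₀gen : φ₀ (IntermediateField.AdjoinSimple.gen E x) = r :=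
    IntermediateField.algHomAdjoinIntegralEquiv_symm_apply_gen E hint ⟨r, hrroot⟩
  letI : Algebra (IntermediateField.adjoin E {x}) ℂ := φ₀.toRingHom.toAlgebra
  haveI : Module.IsTorsionFree (IntermediateField.adjoin E {x}) ℂ := by
    rw [Module.isTorsionFree_iff_algebraMap_injective]; exact φ₀.toRingHom.injective
  haveI : FiniteDimensional (IntermediateField.adjoin E {x}) F :=
    FiniteDimensional.right ℚ _ F
  haveI : Algebra.IsAlgebraic (IntermediateField.adjoin E {x}) F :=
    Algebra.IsAlgebraic.of_finite _ F
  let ψ : F →ₐ[IntermediateField.adjoin E {x}] ℂ := IsAlgClosed.lift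
  let σ₀ : F →+* ℂ := ψ.toRingHom
  have hσ₀x : σ₀ x = r := by
    have h1 : algebraMap (IntermediateField.adjoin E {x}) F
        (IntermediateField.AdjoinSimple.gen E x) = x :=
      IntermediateField.AdjoinSimple.algebraMap_gen E x
    have h2 := ψ.commutes (IntermediateField.AdjoinSimple.gen E x)
    rw [h1] at h2
    exact h2.trans hφ₀gen
  have hσ₀L : ∀ y ∈ L, σ₀ y = ιc y := by
    intro y hy
    have h1 : y = algebraMap (IntermediateField.adjoin E {x}) F
        (algebraMap E (IntermediateField.adjoin E {x}) ⟨y, hy⟩) := by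
      rw [← IsScalarTower.algebraMap_apply]; rfl
    calc σ₀ y = algebraMap (IntermediateField.adjoin E {x}) ℂ
          (algebraMap E (IntermediateField.adjoin E {x}) ⟨y, hy⟩) := by
          conv_lhs => rw [h1]
          exact ψ.commutes _
      _ = φ₀ (algebraMap E (IntermediateField.adjoin E {x}) ⟨y, hy⟩) := rfl
      _ = algebraMap E ℂ ⟨y, hy⟩ := φ₀.commutes _
      _ = ιc y := by rw [halg]; rfl
  -- now make it real
  have him : ∀ y : F, (σ₀ y).im = 0 := htr σ₀
  let σ : F →+* ℝ :=
    { toFun := fun y => (σ₀ y).re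
      map_one' := by simp
      map_mul' := fun a b => by
        show (σ₀ (a * b)).re = (σ₀ a).re * (σ₀ b).re
        rw [map_mul σ₀, Complex.mul_re, him a, him b]; ring
      map_zero' := by simp
      map_add' := fun a b => by
        show (σ₀ (a + b)).re = (σ₀ a).re + (σ₀ b).re
        rw [map_add σ₀, Complex.add_re] }
  refine ⟨σ, fun y hy => ?_, ?_⟩
  · show (σ₀ y).re = ι y
    rw [hσ₀L y hy]; rfl
  · show (σ₀ x).re ≠ ι x
    rw [hσ₀x]
    intro hre
    apply hrne
    have him_r : r.im = 0 := by rw [← hσ₀x]; exact him x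
    apply Complex.ext
    · rw [hre]; rfl
    · rw [him_r]; rfl


/-- For a symmetric matrix `G` over a totally real number field `F` (with a
fixed real embedding `ι`) satisfying Vinberg's quasi-arithmeticity conditions, the field
`K` generated by the cyclic products of `G` equals the field generated by the coefficients
of the characteristic polynomial of `G`. -/
theorem stmt5 (F : Type*) [Field F] [NumberField F]
    (htr : ∀ σ : F →+* ℂ, ∀ x : F, (σ x).im = 0)
    (ι : F →+* ℝ) (N : ℕ) (hN : 1 ≤ N)
    (G : Matrix (Fin N) (Fin N) F) (hGs : G.IsSymm)
    (hGnot : ¬ (G.map ι).PosSemidef)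
    (K : Subfield F)
    (hK : K = Subfield.closure {x : F | ∃ (l : ℕ) (v : Fin (l + 1) → Fin N),
        x = ∏ k : Fin (l + 1), G (v k) (v (k + 1))})
    (hqa : ∀ σ : F →+* ℝ, (∃ x ∈ K, σ x ≠ ι x) → (G.map σ).PosSemidef) :
    K = Subfield.closure {x : F | ∃ i : ℕ, x = G.charpoly.coeff i} := by
  classical
  have hgen : ∀ (l : ℕ) (v : Fin (l + 1) → Fin N),
      (∏ k : Fin (l + 1), G (v k) (v (k + 1))) ∈ K := by
    intro l v
    rw [hK]
    exact Subfield.subset_closure ⟨l, v, rfl⟩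
  have hdiag : ∀ i, G i i ∈ K := by
    intro i
    have := hgen 0 (fun _ => i)
    simpa using this
  have hcoeff : ∀ n, G.charpoly.coeff n ∈ K :=
    auxCharpolyCoeffMem G K hdiag (auxCycProdMem G hGs K hgen)
  set L := Subfield.closure {x : F | ∃ i : ℕ, x = G.charpoly.coeff i} with hL
  -- spectral facts about the real matrix G.map ι
  have hA : (G.map ι).IsHermitian := by
    have hs : (G.map ι).IsSymm := hGs.map ι
    have : (G.map ι)ᴴ = (G.map ι)ᵀ := by
      ext i j
      simp [Matrix.conjTranspose_apply, Matrix.transpose_apply]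
    rw [Matrix.IsHermitian, this]
    exact hs
  have hexneg : ∃ j, hA.eigenvalues j < 0 := by
    by_contra h
    push_neg at h
    exact hGnot (hA.posSemidef_iff_eigenvalues_nonneg.mpr (fun i => h i))
  obtain ⟨j, hμ⟩ := hexneg
  set μ := hA.eigenvalues j with hμdef
  have hv := hA.mulVec_eigenvectorBasis j
  set w0 : Fin N → ℝ := ⇑(hA.eigenvectorBasis j) with hw0def
  have hw0 : w0 ≠ 0 := by
    intro h
    apply hA.eigenvectorBasis.orthonormal.ne_zero j
    ext i
    exact congrFun h i
  have hdet1 : (μ • (1 : Matrix (Fin N) (Fin N) ℝ) - G.map ι).det = 0 := by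
    rw [← Matrix.exists_mulVec_eq_zero_iff]
    refine ⟨w0, hw0, ?_⟩
    rw [Matrix.sub_mulVec, Matrix.smul_mulVec, Matrix.one_mulVec, hv]
    exact sub_self _
  have heval1 : (G.map ι).charpoly.eval μ = 0 := by
    rw [auxCharpolyEvalDet]
    exact hdet1
  apply le_antisymm
  · rw [hK, Subfield.closure_le]
    rintro x ⟨l, v, rfl⟩
    by_contra hxL
    obtain ⟨σ, hσL, hσx⟩ := auxExistsEmbedding F htr ι L _ hxL
    have hPSD : (G.map σ).PosSemidef := hqa σ ⟨_, hgen l v, hσx⟩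
    have hch : (G.map σ).charpoly = (G.map ι).charpoly := by
      rw [Matrix.charpoly_map, Matrix.charpoly_map]
      refine Polynomial.ext fun n => ?_
      rw [Polynomial.coeff_map, Polynomial.coeff_map]
      exact hσL _ (Subfield.subset_closure ⟨n, rfl⟩)
    have heval2 : (μ • (1 : Matrix (Fin N) (Fin N) ℝ) - G.map σ).det = 0 := by
      rw [← auxCharpolyEvalDet, hch]
      exact heval1
    obtain ⟨w, hw, hww⟩ := Matrix.exists_mulVec_eq_zero_iff.mpr heval2
    have hmul : (G.map σ) *ᵥ w = μ • w := by
      rw [Matrix.sub_mulVec, Matrix.smul_mulVec, Matrix.one_mulVec, sub_eq_zero] at hww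
      exact hww.symm
    have h0 := hPSD.dotProduct_mulVec_nonneg w
    have hstar : star w = w := by
      funext i
      simp
    rw [hstar, hmul] at h0
    have h0' : 0 ≤ μ * (w ⬝ᵥ w) := by
      rwa [dotProduct_smul, smul_eq_mul] at h0
    have hnn : 0 ≤ w ⬝ᵥ w := Finset.sum_nonneg fun i _ => mul_self_nonneg _
    have hne : w ⬝ᵥ w ≠ 0 := fun h => hw (dotProduct_self_eq_zero.mp h)
    have hpos : 0 < w ⬝ᵥ w := lt_of_le_of_ne hnn (Ne.symm hne)
    nlinarith
  · rw [Subfield.closure_le]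
    rintro y ⟨n, rfl⟩
    exact hcoeff n
end

section
/- Let N ≥ 1 and let U be an invertible N×N real matrix such that U + Uᵀ is positive semidefinite. Then every complex eigenvalue of the matrix −U⁻¹ · Uᵀ (i.e., every complex root of its characteristic polynomial) has absolute value 1. -/
open Matrix
open scoped ComplexOrder

/-- A root of the charpoly of a complex matrix gives an eigenvector. -/
lemma charpoly_root_exists_eigenvector {n : Type*} [Fintype n] [DecidableEq n]
    (A : Matrix n n ℂ) (μ : ℂ) (h : A.charpoly.IsRoot μ) :
    ∃ v : n → ℂ, v ≠ 0 ∧ A *ᵥ v = μ • v := by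
  have hdet : (scalar n μ - A).det = 0 := by
    rw [Polynomial.IsRoot, Matrix.charpoly, _root_.eval_det,
      Matrix.matPolyEquiv_charmatrix] at h
    simpa using h
  obtain ⟨v, hv0, hv⟩ := (Matrix.exists_mulVec_eq_zero_iff).mpr hdet
  refine ⟨v, hv0, ?_⟩
  rw [sub_mulVec] at hv
  have h1 : (scalar n μ) *ᵥ v = μ • v := by
    ext i; simp [Matrix.scalar_apply, Matrix.mulVec_diagonal]
  rw [h1, sub_eq_zero] at hv
  exact hv.symm

/-- If `U` is an invertible real `N×N` matrix with `U + Uᵀ` positive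
semidefinite, then every complex root of the characteristic polynomial of `-U⁻¹ Uᵀ`
has absolute value 1. -/
theorem stmt7 (N : ℕ) (hN : 1 ≤ N) (U : Matrix (Fin N) (Fin N) ℝ)
    (hU : IsUnit U) (hpsd : (U + Uᵀ).PosSemidef) :
    ∀ μ : ℂ, ((-(U⁻¹ * Uᵀ)).charpoly.map (algebraMap ℝ ℂ)).IsRoot μ →
      ‖μ‖ = 1 := by
  intro μ hroot
  set f := algebraMap ℝ ℂ
  set Uc : Matrix (Fin N) (Fin N) ℂ := U.map f with hUcdef
  have hcp : ((-(U⁻¹ * Uᵀ)).map f).charpoly.IsRoot μ := by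
    rw [Matrix.charpoly_map]; exact hroot
  obtain ⟨v, hv0, hv⟩ := charpoly_root_exists_eigenvector _ μ hcp
  have hUU : U * U⁻¹ = 1 := Matrix.mul_nonsing_inv U (Matrix.isUnit_iff_isUnit_det U |>.mp hU)
  have hkey : U * (-(U⁻¹ * Uᵀ)) = -Uᵀ := by
    rw [mul_neg, ← mul_assoc, hUU, one_mul]
  have hUc : IsUnit Uc := hU.map (RingHom.mapMatrix f)
  have hkeyc : Uc * ((-(U⁻¹ * Uᵀ)).map f) = -(Uᵀ.map f) := by
    rw [hUcdef, ← Matrix.map_mul, hkey]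
    ext i j
    simp
  have hrel : (Uᵀ.map f) *ᵥ v = -(μ • (Uc *ᵥ v)) := by
    have h1 : Uc *ᵥ (((-(U⁻¹ * Uᵀ)).map f) *ᵥ v) = μ • (Uc *ᵥ v) := by
      rw [hv, mulVec_smul]
    rw [mulVec_mulVec, hkeyc, neg_mulVec] at h1
    exact neg_eq_iff_eq_neg.mp h1
  set a : ℂ := star v ⬝ᵥ (Uc *ᵥ v) with ha
  have hstara : star a = star v ⬝ᵥ ((Uᵀ.map f) *ᵥ v) := by
    simp only [ha, dotProduct, mulVec, dotProduct, star_sum, star_mul',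
      Finset.mul_sum, map_sum]
    rw [Finset.sum_comm]
    apply Finset.sum_congr rfl
    intro j _
    apply Finset.sum_congr rfl
    intro i _
    simp only [hUcdef, Matrix.map_apply, transpose_apply, Pi.star_apply, star_star,
      f, Complex.star_def, Complex.conj_conj, Complex.coe_algebraMap, Complex.conj_ofReal]
    ring
  have hconj : star a = -(μ * a) := by
    rw [hstara, hrel]
    simp [ha, smul_eq_mul, dotProduct_smul]
  have habs : ‖a‖ = ‖μ‖ * ‖a‖ := by
    have h1 := congrArg norm hconj
    rwa [norm_neg, norm_mul,
      show ‖star a‖ = ‖a‖ from Complex.norm_conj a] at h1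
  by_cases haz : a = 0
  · -- quadratic form vanishes: use PSD to conclude μ = 1
    have hSpsd : ((U + Uᵀ).map f).PosSemidef := by
      obtain ⟨B, hB⟩ : ∃ B : Matrix (Fin N) (Fin N) ℝ, U + Uᵀ = Bᴴ * B := by
        open scoped MatrixOrder in
        exact CStarAlgebra.nonneg_iff_eq_star_mul_self.mp hpsd.nonneg
      have hmul : (U + Uᵀ).map f = (B.map f)ᴴ * (B.map f) := by
        rw [hB, Matrix.map_mul, Matrix.conjTranspose_map]
        intro x; simp [f, Complex.conj_ofReal]
      rw [hmul]
      exact Matrix.posSemidef_conjTranspose_mul_self _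
    have hmapadd : (U + Uᵀ).map f = Uc + Uᵀ.map f := by
      ext i j; simp [hUcdef, Matrix.map_apply]
    have hform : star v ⬝ᵥ (((U + Uᵀ).map f) *ᵥ v) = 0 := by
      rw [hmapadd, add_mulVec, dotProduct_add, ← ha, ← hstara, haz]
      simp
    have hker : ((U + Uᵀ).map f) *ᵥ v = 0 :=
      (hSpsd.dotProduct_mulVec_zero_iff v).mp hform
    rw [hmapadd, add_mulVec, hrel, add_neg_eq_zero] at hker
    have hUcv : Uc *ᵥ v ≠ 0 := by
      intro hz
      apply hv0
      have hinj := Matrix.mulVec_injective_iff_isUnit.mpr hUc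
      apply hinj
      simpa using hz
    have h1μ : (1 - μ) • (Uc *ᵥ v) = 0 := by
      rw [sub_smul, one_smul, ← hker, sub_self]
    have hμ1 : μ = 1 := by
      rcases smul_eq_zero.mp h1μ with h | h
      · linear_combination -h
      · exact absurd h hUcv
    simp [hμ1]
  · have hne : ‖a‖ ≠ 0 := by simpa using haz
    have := mul_right_cancel₀ hne
      (show 1 * ‖a‖ = ‖μ‖ * ‖a‖ by
        rw [one_mul]; exact habs)
    exact this.symm
end

section
/- Let N ≥ 1 and let U be an N×N real matrix such that U + Uᵀ is positive definite. Then U is invertible, the matrix −U⁻¹ · Uᵀ, regarded as a complex matrix, is diagonalisable (conjugate over ℂ to a diagonal matrix), and all of its complex eigenvalues have absolute value 1. -/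
open Matrix

lemma eval_charpoly_aux {N : ℕ} (M : Matrix (Fin N) (Fin N) ℂ) (μ : ℂ) :
    M.charpoly.eval μ = (Matrix.diagonal (fun _ => μ) - M).det := by
  rw [Matrix.charpoly, ← Polynomial.coe_evalRingHom, RingHom.map_det]
  congr 1
  ext i j
  by_cases h : i = j <;>
    simp [Matrix.charmatrix_apply, Matrix.diagonal, h, Matrix.map_apply]

open scoped MatrixOrder in
lemma sqrt_aux {N : ℕ} (A : Matrix (Fin N) (Fin N) ℝ) (hA : A.PosSemidef) :
    ∃ s : Matrix (Fin N) (Fin N) ℝ, s * s = A ∧ sᴴ = s :=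
  ⟨CFC.sqrt A, CFC.sqrt_mul_sqrt_self A hA.nonneg, (CFC.sqrt_nonneg A).posSemidef.1⟩

/-- If `U` is a real `N×N` matrix with `U + Uᵀ` positive definite, then `U`
is invertible, `-U⁻¹ Uᵀ` is diagonalisable over `ℂ`, and all complex roots of its
characteristic polynomial have absolute value 1. -/
theorem stmt8 (N : ℕ) (hN : 1 ≤ N) (U : Matrix (Fin N) (Fin N) ℝ)
    (hpd : (U + Uᵀ).PosDef) :
    IsUnit U ∧
    (∃ (P : Matrix (Fin N) (Fin N) ℂ) (d : Fin N → ℂ), IsUnit P ∧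
      (-(U⁻¹ * Uᵀ)).map (algebraMap ℝ ℂ) = P * Matrix.diagonal d * P⁻¹) ∧
    (∀ μ : ℂ, ((-(U⁻¹ * Uᵀ)).charpoly.map (algebraMap ℝ ℂ)).IsRoot μ →
      ‖μ‖ = 1) := by
  -- Part 1 : U is invertible
  have hUdet : IsUnit U.det := by
    rw [isUnit_iff_ne_zero]
    intro h0
    obtain ⟨v, hv, hUv⟩ := (Matrix.exists_mulVec_eq_zero_iff).mpr h0
    have hpos := hpd.dotProduct_mulVec_pos hv
    rw [star_trivial, add_mulVec, dotProduct_add, hUv, dotProduct_zero, zero_add,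
      mulVec_transpose, dotProduct_comm, ← dotProduct_mulVec, hUv,
      dotProduct_zero] at hpos
    simp at hpos
  have hUunit : IsUnit U := (Matrix.isUnit_iff_isUnit_det U).mpr hUdet
  -- real square root of S = U + Uᵀ
  have hS : (U + Uᵀ).PosDef := hpd
  obtain ⟨s₀, hs₀mul, hs₀herm⟩ := sqrt_aux _ hS.posSemidef
  have hs₀sym : ∀ i j, s₀ j i = s₀ i j := by
    intro i j
    have := congrFun (congrFun hs₀herm i) j
    simpa [Matrix.conjTranspose_apply] using this
  have hs₀det : IsUnit s₀.det := by
    rw [isUnit_iff_ne_zero]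
    intro h
    have h2 : s₀.det * s₀.det = (U + Uᵀ).det := by rw [← Matrix.det_mul, hs₀mul]
    have h3 := hS.det_pos
    rw [h, mul_zero] at h2
    exact absurd h2.symm (ne_of_gt h3)
  -- pass to ℂ
  set V : Matrix (Fin N) (Fin N) ℂ := U.map (algebraMap ℝ ℂ) with hVdef
  set s : Matrix (Fin N) (Fin N) ℂ := s₀.map (algebraMap ℝ ℂ) with hsdef
  have hVH : Uᵀ.map (algebraMap ℝ ℂ) = Vᴴ := by
    ext i j
    simp [hVdef, Matrix.map_apply, Matrix.conjTranspose_apply, Matrix.transpose_apply,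
      Complex.conj_ofReal]
  have hsH : sᴴ = s := by
    ext i j
    simp [hsdef, Matrix.map_apply, Matrix.conjTranspose_apply, Complex.conj_ofReal, hs₀sym i j]
  have hsdet : IsUnit s.det := by
    rw [hsdef, ← RingHom.mapMatrix_apply, ← RingHom.map_det]
    exact hs₀det.map (algebraMap ℝ ℂ)
  have hVdet : IsUnit V.det := by
    rw [hVdef, ← RingHom.mapMatrix_apply, ← RingHom.map_det]
    exact hUdet.map (algebraMap ℝ ℂ)
  have hVunit : IsUnit V := (Matrix.isUnit_iff_isUnit_det V).mpr hVdet
  have hssmul : s * s = V + Vᴴ := by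
    rw [← hVH, hsdef, hVdef, ← Matrix.map_mul, hs₀mul]
    ext i j
    simp [Matrix.map_apply, Matrix.add_apply]
  have hst : s * s⁻¹ = 1 := Matrix.mul_nonsing_inv s hsdet
  have hts : s⁻¹ * s = 1 := Matrix.nonsing_inv_mul s hsdet
  have hsinvunit : IsUnit s⁻¹ :=
    (Matrix.isUnit_iff_isUnit_det _).mpr (Matrix.isUnit_nonsing_inv_det s hsdet)
  -- the matrix B
  set B : Matrix (Fin N) (Fin N) ℂ := s⁻¹ * V * s⁻¹ with hBdef
  have hBunit : IsUnit B := (hsinvunit.mul hVunit).mul hsinvunit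
  have hBdet : IsUnit B.det := (Matrix.isUnit_iff_isUnit_det B).mp hBunit
  have hVsBs : V = s * B * s := by
    rw [hBdef]
    simp only [← Matrix.mul_assoc, hst, Matrix.one_mul]
    rw [Matrix.mul_assoc V, hts, Matrix.mul_one]
  have hBH : Bᴴ = 1 - B := by
    have h1 : Bᴴ = s⁻¹ * Vᴴ * s⁻¹ := by
      rw [hBdef, Matrix.conjTranspose_mul, Matrix.conjTranspose_mul,
        Matrix.conjTranspose_nonsing_inv, hsH, Matrix.mul_assoc]
    have hVHeq : Vᴴ = s * s - V := eq_sub_of_add_eq' hssmul.symm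
    have h2 : Vᴴ = s * (1 - B) * s := by
      rw [Matrix.mul_sub, Matrix.sub_mul, Matrix.mul_one, ← hVsBs]
      exact hVHeq
    rw [h1, h2]
    simp only [← Matrix.mul_assoc, hts, Matrix.one_mul]
    rw [Matrix.mul_assoc _ s, hst, Matrix.mul_one]
  -- Hermitian matrix H
  set H : Matrix (Fin N) (Fin N) ℂ := Complex.I • (B - (1/2 : ℂ) • 1) with hHdef
  have hH : H.IsHermitian := by
    show Hᴴ = H
    rw [hHdef, Matrix.conjTranspose_smul, Matrix.conjTranspose_sub,
      Matrix.conjTranspose_smul, Matrix.conjTranspose_one, hBH]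
    rw [show (star Complex.I) = -Complex.I from Complex.conj_I,
      show (star ((1:ℂ)/2)) = ((1:ℂ)/2) by norm_num]
    module
  set u' : Matrix (Fin N) (Fin N) ℂ := (hH.eigenvectorUnitary : Matrix (Fin N) (Fin N) ℂ)
    with hu'def
  have huu : u' * star u' = 1 := Matrix.mem_unitaryGroup_iff.mp hH.eigenvectorUnitary.2
  have huu' : star u' * u' = 1 := Matrix.mem_unitaryGroup_iff'.mp hH.eigenvectorUnitary.2
  have hu'det : IsUnit u'.det :=
    IsUnit.of_mul_eq_one _ (by rw [← Matrix.det_mul, huu, Matrix.det_one])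
  have hu'unit : IsUnit u' := (Matrix.isUnit_iff_isUnit_det u').mpr hu'det
  have hspec : H = u' * Matrix.diagonal (RCLike.ofReal ∘ hH.eigenvalues) * star u' :=
    hH.spectral_theorem
  set d₀ : Fin N → ℂ := fun j => (1/2 : ℂ) - Complex.I * ((hH.eigenvalues j : ℝ) : ℂ)
    with hd₀def
  have hd₀ : ∀ j, d₀ j ≠ 0 := by
    intro j h
    have := congrArg Complex.re h
    simp [hd₀def, Complex.sub_re, Complex.mul_re] at this
  have hdiagdec : Matrix.diagonal d₀ =
      ((1:ℂ)/2) • (1 : Matrix (Fin N) (Fin N) ℂ)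
        + (-Complex.I) • Matrix.diagonal (RCLike.ofReal ∘ hH.eigenvalues) := by
    ext i j
    by_cases h : i = j
    · subst h
      simp [Matrix.diagonal, hd₀def, Matrix.one_apply, RCLike.ofReal]
      ring
    · simp [Matrix.diagonal_apply_ne _ h, Matrix.one_apply_ne h]
  have hBspec : B = u' * Matrix.diagonal d₀ * star u' := by
    have h2 : ((1:ℂ)/2) • (1 : Matrix (Fin N) (Fin N) ℂ) + (-Complex.I) • H = B := by
      rw [hHdef, smul_smul, show -Complex.I * Complex.I = 1 by
        rw [neg_mul, Complex.I_mul_I, neg_neg], one_smul]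
      module
    rw [← h2, hspec, hdiagdec, Matrix.mul_add, Matrix.add_mul]
    congr 1
    · rw [mul_smul_comm, smul_mul_assoc, Matrix.mul_one, huu]
    · rw [mul_smul_comm, smul_mul_assoc]
  have hBinv : B⁻¹ = u' * Matrix.diagonal (fun j => (d₀ j)⁻¹) * star u' := by
    apply Matrix.inv_eq_right_inv
    rw [hBspec]
    have h3 : (u' * Matrix.diagonal d₀ * star u') *
        (u' * Matrix.diagonal (fun j => (d₀ j)⁻¹) * star u')
        = u' * (Matrix.diagonal d₀ * (star u' * u') * Matrix.diagonal (fun j => (d₀ j)⁻¹))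
          * star u' := by
      simp only [Matrix.mul_assoc]
    rw [h3, huu', Matrix.mul_one, Matrix.diagonal_mul_diagonal,
      show (fun i => d₀ i * (d₀ i)⁻¹) = fun _ => (1:ℂ) from
        funext fun i => mul_inv_cancel₀ (hd₀ i),
      Matrix.diagonal_one, Matrix.mul_one, huu]
  -- inverse of V
  have hBB : B * B⁻¹ = 1 := Matrix.mul_nonsing_inv B hBdet
  have hVinv : V⁻¹ = s⁻¹ * B⁻¹ * s⁻¹ := by
    apply Matrix.inv_eq_right_inv
    rw [hVsBs]
    calc s * B * s * (s⁻¹ * B⁻¹ * s⁻¹)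
        = s * B * (s * s⁻¹) * B⁻¹ * s⁻¹ := by simp only [Matrix.mul_assoc]
      _ = 1 := by rw [hst, Matrix.mul_one, Matrix.mul_assoc s B, hBB, Matrix.mul_one, hst]
  have hUinvmap : (U⁻¹).map (algebraMap ℝ ℂ) = V⁻¹ := by
    refine (Matrix.inv_eq_left_inv ?_).symm
    rw [hVdef, ← Matrix.map_mul, Matrix.nonsing_inv_mul U hUdet,
      Matrix.map_one _ (map_zero _) (map_one _)]
  -- the conjugating matrix P and diagonal d
  set P : Matrix (Fin N) (Fin N) ℂ := s⁻¹ * u' with hPdef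
  set d : Fin N → ℂ := fun j => 1 - (d₀ j)⁻¹ with hddef
  have hPunit : IsUnit P := hsinvunit.mul hu'unit
  have hPdet : IsUnit P.det := (Matrix.isUnit_iff_isUnit_det P).mp hPunit
  have hPinv : P⁻¹ = star u' * s := by
    apply Matrix.inv_eq_right_inv
    rw [hPdef, Matrix.mul_assoc, ← Matrix.mul_assoc u', huu, Matrix.one_mul, hts]
  -- the key diagonalisation identity
  have hmain : (-(U⁻¹ * Uᵀ)).map (algebraMap ℝ ℂ) = P * Matrix.diagonal d * P⁻¹ := by
    have hneg : (-(U⁻¹ * Uᵀ)).map (algebraMap ℝ ℂ) = -(V⁻¹ * Vᴴ) := by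
      rw [← hUinvmap, ← hVH, ← Matrix.map_mul]
      ext i j
      simp [Matrix.map_apply]
    have hVHeq2 : Vᴴ = s * (1 - B) * s := by
      rw [Matrix.mul_sub, Matrix.sub_mul, Matrix.mul_one, ← hVsBs]
      exact eq_sub_of_add_eq' hssmul.symm
    have hstep : V⁻¹ * Vᴴ = s⁻¹ * (B⁻¹ - 1) * s := by
      rw [hVinv, hVHeq2]
      calc s⁻¹ * B⁻¹ * s⁻¹ * (s * (1 - B) * s)
          = s⁻¹ * B⁻¹ * (s⁻¹ * s) * (1 - B) * s := by simp only [Matrix.mul_assoc]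
        _ = s⁻¹ * (B⁻¹ * (1 - B)) * s := by
            rw [hts, Matrix.mul_one, Matrix.mul_assoc s⁻¹ B⁻¹]
        _ = s⁻¹ * (B⁻¹ - 1) * s := by
            rw [Matrix.mul_sub, Matrix.mul_one, Matrix.nonsing_inv_mul B hBdet]
    have hdiag : (1 : Matrix (Fin N) (Fin N) ℂ) - B⁻¹ = u' * Matrix.diagonal d * star u' := by
      rw [hBinv, hddef]
      have h1 : (1 : Matrix (Fin N) (Fin N) ℂ) = u' * 1 * star u' := by
        rw [Matrix.mul_one, huu]
      rw [show Matrix.diagonal (fun j => 1 - (d₀ j)⁻¹)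
            = 1 - Matrix.diagonal (fun j => (d₀ j)⁻¹) by
          rw [← Matrix.diagonal_one, Matrix.diagonal_sub],
        Matrix.mul_sub, Matrix.sub_mul]
      rw [← h1]
    rw [hneg, hstep, hPinv, hPdef]
    calc -(s⁻¹ * (B⁻¹ - 1) * s) = s⁻¹ * (1 - B⁻¹) * s := by
          rw [show -(s⁻¹ * (B⁻¹ - 1) * s) = s⁻¹ * -(B⁻¹ - 1) * s by
            rw [Matrix.mul_neg, Matrix.neg_mul], neg_sub]
      _ = s⁻¹ * (u' * Matrix.diagonal d * star u') * s := by rw [hdiag]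
      _ = s⁻¹ * u' * Matrix.diagonal d * (star u' * s) := by simp only [Matrix.mul_assoc]
  refine ⟨hUunit, ?_, ?_⟩
  · exact ⟨P, d, hPunit, hmain⟩

  -- Part 3 : eigenvalues have modulus 1
  have habs : ∀ j, ‖d j‖ = 1 := by
    intro j
    have hconj : d₀ j - 1 = -((starRingEnd ℂ) (d₀ j)) := by
      rw [hd₀def]
      simp only [Complex.ext_iff, Complex.sub_re, Complex.sub_im, Complex.neg_re,
        Complex.neg_im, Complex.mul_re, Complex.mul_im, Complex.I_re, Complex.I_im,
        Complex.ofReal_re, Complex.ofReal_im, Complex.conj_re, Complex.conj_im,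
        Complex.one_re, Complex.one_im]
      constructor <;> norm_num
    have hdj : d j = (d₀ j - 1) / d₀ j := by
      rw [hddef, eq_div_iff (hd₀ j), sub_mul, one_mul, inv_mul_cancel₀ (hd₀ j)]
    rw [hdj, norm_div, hconj, norm_neg, Complex.norm_conj,
      div_self (norm_ne_zero_iff.mpr (hd₀ j))]
  intro μ hroot
  rw [← Matrix.charpoly_map] at hroot
  rw [Polynomial.IsRoot, eval_charpoly_aux, hmain] at hroot
  have hconstdiag : Matrix.diagonal (fun _ : Fin N => μ) = P * Matrix.diagonal (fun _ => μ) * P⁻¹ := by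
    rw [← Matrix.smul_one_eq_diagonal, mul_smul_comm, Matrix.mul_one, smul_mul_assoc,
      Matrix.mul_nonsing_inv P hPdet]
  have hfact : Matrix.diagonal (fun _ : Fin N => μ) - P * Matrix.diagonal d * P⁻¹
      = P * Matrix.diagonal (fun j => μ - d j) * P⁻¹ := by
    rw [hconstdiag, show Matrix.diagonal (fun j => μ - d j)
        = Matrix.diagonal (fun _ => μ) - Matrix.diagonal d from (Matrix.diagonal_sub _ _).symm,
      Matrix.mul_sub, Matrix.sub_mul]
  rw [hfact, Matrix.det_mul, Matrix.det_mul] at hroot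
  have hdet0 : (Matrix.diagonal (fun j => μ - d j)).det = 0 := by
    set q := (Matrix.diagonal fun j => μ - d j).det with hq
    have hPP : P.det * P⁻¹.det = 1 := by
      rw [← Matrix.det_mul, Matrix.mul_nonsing_inv P hPdet, Matrix.det_one]
    have h5 : q = q * (P.det * P⁻¹.det) := by rw [hPP, mul_one]
    rw [h5, show q * (P.det * P⁻¹.det) = P.det * q * P⁻¹.det from by ring, hroot]
  rw [Matrix.det_diagonal, Finset.prod_eq_zero_iff] at hdet0
  obtain ⟨j, -, hj⟩ := hdet0
  rw [sub_eq_zero] at hj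
  rw [hj]
  exact habs j
end
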